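/- arXiv:2503.24208 — 2 statements merged into one kernel-verified Lean document; each statement's English description precedes it below -/
import Mathlib

section
/- Let ω : ℝ³ × ℝ³ → ℝ^{3×3} be a smooth matrix-valued kernel and let f : ℝ³ → ℝ be smooth and compactly supported. Define the reflected function g(v) = f(−v) and the reflected kernel ω̃(v,v') = ω(−v,−v'). Then C_{ω̃}[g](v) = C_ω[f](−v) for all v ∈ ℝ³. Consequently, if ω satisfies the parity symmetry ω(−v,−v') = ω(v,v') for all v, v', then the velocity reflection of any solution of ∂f/∂t = C_ω[f] is again a solution; conversely, requiring that reflections of solutions are solutions forces the collision kernel to satisfy ω(v,v') = ω(−v,−v'). -/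
open MeasureTheory Matrix
open scoped RealInnerProductSpace ContDiff

noncomputable section

/-- ℝ³ as three-dimensional Euclidean space. -/
abbrev E3 : Type := EuclideanSpace ℝ (Fin 3)

/-- A 3×3 matrix acting on a Euclidean vector. -/
def matVec (M : Matrix (Fin 3) (Fin 3) ℝ) (x : E3) : E3 :=
  (EuclideanSpace.equiv (Fin 3) ℝ).symm (M.mulVec (EuclideanSpace.equiv (Fin 3) ℝ x))

/-- Divergence of a vector field on ℝ³. -/
def div3 (F : E3 → E3) (v : E3) : ℝ :=
  ∑ i : Fin 3, fderiv ℝ F v (EuclideanSpace.single i 1) i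

/-- The integrand Ω(v,v') (f(v') ∇f(v) − f(v) ∇f(v')) of the collision operator. -/
def collKer (Ω : E3 → E3 → Matrix (Fin 3) (Fin 3) ℝ) (f : E3 → ℝ) (v v' : E3) : E3 :=
  matVec (Ω v v') (f v' • gradient f v - f v • gradient f v')

/-- The collision operator C_Ω[f](v) = div_v ∫ Ω(v,v')(f(v')∇f(v) − f(v)∇f(v')) dv'. -/
def collOp (Ω : E3 → E3 → Matrix (Fin 3) (Fin 3) ℝ) (f : E3 → ℝ) (v : E3) : ℝ :=
  div3 (fun w => ∫ v', collKer Ω f w v') v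

section Aux

variable {F : Type*} [NormedAddCommGroup F] [NormedSpace ℝ F]

lemma fderiv_comp_neg_apply (G : E3 → F) (v u : E3) :
    fderiv ℝ (fun w => G (-w)) v u = -(fderiv ℝ G (-v) u) := by
  by_cases h : DifferentiableAt ℝ G (-v)
  · have h1 : HasFDerivAt (fun w : E3 => -w) (-(ContinuousLinearMap.id ℝ E3)) v :=
      (hasFDerivAt_id v).neg
    have h2 : HasFDerivAt (fun w => G (-w))
        ((fderiv ℝ G (-v)).comp (-(ContinuousLinearMap.id ℝ E3))) v :=
      h.hasFDerivAt.comp v h1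
    rw [h2.fderiv]; simp
  · have h2 : ¬ DifferentiableAt ℝ (fun w => G (-w)) v := by
      intro hc
      have h3 : DifferentiableAt ℝ ((fun w => G (-w)) ∘ fun w : E3 => -w) (-v) :=
        DifferentiableAt.comp (-v) (by simpa using hc) (differentiableAt_fun_id.neg)
      simp only [Function.comp_def, neg_neg] at h3
      exact h h3
    rw [fderiv_zero_of_not_differentiableAt h, fderiv_zero_of_not_differentiableAt h2]
    simp

lemma matVec_neg (M : Matrix (Fin 3) (Fin 3) ℝ) (x : E3) :
    matVec M (-x) = -(matVec M x) := by
  simp [matVec, Matrix.mulVec_neg]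

lemma gradient_comp_neg (f : E3 → ℝ) (v : E3) :
    gradient (fun a => f (-a)) v = -(gradient f (-v)) := by
  unfold gradient
  rw [← map_neg]
  congr 1
  ext u
  simpa using fderiv_comp_neg_apply f v u

lemma collKer_reflect (Ω : E3 → E3 → Matrix (Fin 3) (Fin 3) ℝ) (f : E3 → ℝ) (v v' : E3) :
    collKer (fun a b => Ω (-a) (-b)) (fun a => f (-a)) v v'
      = -(collKer Ω f (-v) (-v')) := by
  simp only [collKer, gradient_comp_neg, ← matVec_neg]
  exact congrArg (matVec _) (by module)

lemma collOp_reflect (Ω : E3 → E3 → Matrix (Fin 3) (Fin 3) ℝ) (f : E3 → ℝ) (v : E3) :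
    collOp (fun a b => Ω (-a) (-b)) (fun a => f (-a)) v = collOp Ω f (-v) := by
  unfold collOp
  have hfun : (fun w => ∫ v', collKer (fun a b => Ω (-a) (-b)) (fun a => f (-a)) w v')
      = fun w => -((fun z => ∫ v', collKer Ω f z v') (-w)) := by
    funext w
    simp only [collKer_reflect]
    rw [integral_neg]
    congr 1
    exact integral_neg_eq_self (fun v' => collKer Ω f (-w) v') volume
  have key : ∀ (H : E3 → E3) (v u : E3),
      fderiv ℝ (fun w => -(H (-w))) v u = fderiv ℝ H (-v) u := by
    intro H v u
    rw [fderiv_fun_neg]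
    simp only [ContinuousLinearMap.neg_apply]
    rw [fderiv_comp_neg_apply]
    simp
  rw [hfun]
  unfold div3
  refine Finset.sum_congr rfl fun i _ => ?_
  exact congrArg (fun r : E3 => r i)
    (key (fun z => ∫ v', collKer Ω f z v') v (EuclideanSpace.single i 1))

end Aux

/-- behaviour of the collision operator under velocity reflection;
the reflected kernel generates the reflected dynamics, and for parity-symmetric
kernels the reflection of a solution is again a solution. -/
theorem reflection_symmetry
    (Ω : E3 → E3 → Matrix (Fin 3) (Fin 3) ℝ)
    (hΩ : ∀ i j, ContDiff ℝ ∞ fun p : E3 × E3 => Ω p.1 p.2 i j)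
    (f : E3 → ℝ) (hf : ContDiff ℝ ∞ f) (hfc : HasCompactSupport f) :
    (∀ v : E3,
        collOp (fun a b => Ω (-a) (-b)) (fun a => f (-a)) v = collOp Ω f (-v)) ∧
    ((∀ v v' : E3, Ω (-v) (-v') = Ω v v') →
      ∀ v : E3, collOp Ω (fun a => f (-a)) v = collOp Ω f (-v)) := by
  refine ⟨fun v => collOp_reflect Ω f v, fun hsym v => ?_⟩
  have hΩ' : (fun a b => Ω (-a) (-b)) = Ω := by
    funext a b; exact hsym a b
  have h := collOp_reflect Ω f v
  rwa [hΩ'] at h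
end
end

section
/- Let v, v' ∈ ℝ³ with u = v − v' ≠ 0 and u × r ≠ 0 where r = v + v', and let U ∈ O(3) be an orthogonal matrix. The CM2 collision kernel is rotationally equivariant: ω(Uv, Uv') = U ω(v,v') Uᵀ. -/
open Matrix
open scoped RealInnerProductSpace

noncomputable section

/-- Outer product x yᵀ of two vectors in ℝ³. -/
def outer (x y : E3) : Matrix (Fin 3) (Fin 3) ℝ :=
  Matrix.vecMulVec (fun i => x i) (fun i => y i)

/-- Cross product on ℝ³. -/
def cross3 (x y : E3) : E3 :=
  (EuclideanSpace.equiv (Fin 3) ℝ).symm (crossProduct (fun i => x i) (fun i => y i))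

/-- P = I − uuᵀ/|u|², the orthogonal projection onto the plane perpendicular to u. -/
def proj3 (u : E3) : Matrix (Fin 3) (Fin 3) ℝ :=
  1 - (‖u‖ ^ 2)⁻¹ • outer u u

/-- The CM2 collision kernel
ω(v,v') = P (g_r(|u|,|r|,|s|)² r̃ r̃ᵀ + g_s(|u|,|r|,|s|)² s̃ s̃ᵀ) P,
where u = v − v', r = v + v', s = u × r, P = I − uuᵀ/|u|²,
r̃ = Pr/|Pr| and s̃ = s/|s|. -/
def cm2 (gr gs : ℝ → ℝ → ℝ → ℝ) (v v' : E3) : Matrix (Fin 3) (Fin 3) ℝ :=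
  let u : E3 := v - v'
  let r : E3 := v + v'
  let s : E3 := cross3 u r
  let P : Matrix (Fin 3) (Fin 3) ℝ := proj3 u
  let rt : E3 := ‖matVec P r‖⁻¹ • matVec P r
  let st : E3 := ‖s‖⁻¹ • s
  P * ((gr ‖u‖ ‖r‖ ‖s‖) ^ 2 • outer rt rt + (gs ‖u‖ ‖r‖ ‖s‖) ^ 2 • outer st st) * P

lemma matVec_apply (M : Matrix (Fin 3) (Fin 3) ℝ) (x : E3) (i : Fin 3) :
    matVec M x i = M.mulVec (fun j => x j) i := rfl

lemma matVec_sub (M : Matrix (Fin 3) (Fin 3) ℝ) (x y : E3) :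
    matVec M (x - y) = matVec M x - matVec M y := by
  ext i; simp [matVec_apply, Matrix.mulVec, dotProduct, Fin.sum_univ_three]; ring

lemma matVec_add (M : Matrix (Fin 3) (Fin 3) ℝ) (x y : E3) :
    matVec M (x + y) = matVec M x + matVec M y := by
  ext i; simp [matVec_apply, Matrix.mulVec, dotProduct, Fin.sum_univ_three]; ring

lemma matVec_smul (M : Matrix (Fin 3) (Fin 3) ℝ) (c : ℝ) (x : E3) :
    matVec M (c • x) = c • matVec M x := by
  ext i; simp [matVec_apply, Matrix.mulVec, dotProduct, Fin.sum_univ_three]; ring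

lemma matVec_mul (A B : Matrix (Fin 3) (Fin 3) ℝ) (x : E3) :
    matVec (A * B) x = matVec A (matVec B x) := by
  ext i; simp [matVec_apply, ← Matrix.mulVec_mulVec]

lemma matVec_one (x : E3) : matVec 1 x = x := by
  ext i; simp [matVec_apply]

lemma UtU (U : Matrix (Fin 3) (Fin 3) ℝ) (hU : U ∈ Matrix.orthogonalGroup (Fin 3) ℝ) :
    Uᵀ * U = 1 := by
  have := (Matrix.mem_orthogonalGroup_iff' (Fin 3) ℝ).mp hU
  simpa [Matrix.star_eq_conjTranspose] using this

lemma UUt (U : Matrix (Fin 3) (Fin 3) ℝ) (hU : U ∈ Matrix.orthogonalGroup (Fin 3) ℝ) :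
    U * Uᵀ = 1 := by
  have := (Matrix.mem_orthogonalGroup_iff (Fin 3) ℝ).mp hU
  simpa [Matrix.star_eq_conjTranspose] using this

lemma inner_eq_sum (a b : E3) : ⟪a, b⟫ = ∑ i, a i * b i := by
  simp [PiLp.inner_apply, RCLike.inner_apply]
  exact Finset.sum_congr rfl (fun _ _ => mul_comm _ _)

lemma inner_matVec (M : Matrix (Fin 3) (Fin 3) ℝ) (a b : E3) :
    ⟪matVec M a, b⟫ = ⟪a, matVec Mᵀ b⟫ := by
  simp [inner_eq_sum, matVec_apply, Matrix.mulVec, dotProduct, Fin.sum_univ_three,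
    Matrix.transpose_apply]
  ring

lemma norm_matVec (U : Matrix (Fin 3) (Fin 3) ℝ) (hU : U ∈ Matrix.orthogonalGroup (Fin 3) ℝ)
    (x : E3) : ‖matVec U x‖ = ‖x‖ := by
  have h : matVec Uᵀ (matVec U x) = x := by
    rw [← matVec_mul, UtU U hU, matVec_one]
  have key : ⟪matVec U x, matVec U x⟫ = ⟪x, x⟫ := by
    rw [inner_matVec, h]
  rw [real_inner_self_eq_norm_sq, real_inner_self_eq_norm_sq] at key
  nlinarith [norm_nonneg (matVec U x), norm_nonneg x]

lemma outer_matVec (M : Matrix (Fin 3) (Fin 3) ℝ) (x y : E3) :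
    outer (matVec M x) (matVec M y) = M * outer x y * Mᵀ := by
  ext i j
  simp [outer, matVec_apply, Matrix.vecMulVec_apply, Matrix.mul_apply, Matrix.mulVec,
    dotProduct, Fin.sum_univ_three, Matrix.transpose_apply]
  ring

lemma outer_smul (c d : ℝ) (x y : E3) :
    outer (c • x) (d • y) = (c * d) • outer x y := by
  ext i j
  simp [outer, Matrix.vecMulVec_apply]
  ring

lemma cross_matVec (M : Matrix (Fin 3) (Fin 3) ℝ) (x y : E3) :
    matVec Mᵀ (cross3 (matVec M x) (matVec M y)) = M.det • cross3 x y := by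
  ext i
  fin_cases i <;>
    simp [cross3, matVec_apply, crossProduct, Matrix.mulVec, dotProduct,
      Fin.sum_univ_three, Matrix.det_fin_three, Matrix.transpose_apply] <;> ring

lemma cross3_matVec (U : Matrix (Fin 3) (Fin 3) ℝ) (hU : U ∈ Matrix.orthogonalGroup (Fin 3) ℝ)
    (x y : E3) :
    cross3 (matVec U x) (matVec U y) = U.det • matVec U (cross3 x y) := by
  have h2 := congrArg (matVec U) (cross_matVec U x y)
  rw [← matVec_mul, UUt U hU, matVec_one, matVec_smul] at h2
  exact h2

lemma det_sq (U : Matrix (Fin 3) (Fin 3) ℝ) (hU : U ∈ Matrix.orthogonalGroup (Fin 3) ℝ) :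
    U.det * U.det = 1 := by
  have := congrArg Matrix.det (UtU U hU)
  simpa [Matrix.det_mul, Matrix.det_transpose] using this

lemma abs_det (U : Matrix (Fin 3) (Fin 3) ℝ) (hU : U ∈ Matrix.orthogonalGroup (Fin 3) ℝ) :
    |U.det| = 1 := by
  have h := det_sq U hU
  rcases mul_self_eq_one_iff.mp h with h1 | h1 <;> simp [h1]

lemma proj3_matVec (U : Matrix (Fin 3) (Fin 3) ℝ) (hU : U ∈ Matrix.orthogonalGroup (Fin 3) ℝ)
    (u : E3) : proj3 (matVec U u) = U * proj3 u * Uᵀ := by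
  rw [proj3, proj3, norm_matVec U hU, outer_matVec, Matrix.mul_sub, Matrix.sub_mul,
    Matrix.mul_one, UUt U hU]
  congr 1
  rw [Matrix.mul_smul, Matrix.smul_mul]

lemma myConjMul (U : Matrix (Fin 3) (Fin 3) ℝ) (hU : U ∈ Matrix.orthogonalGroup (Fin 3) ℝ)
    (A B : Matrix (Fin 3) (Fin 3) ℝ) :
    (U * A * Uᵀ) * (U * B * Uᵀ) = U * (A * B) * Uᵀ := by
  simp only [Matrix.mul_assoc]
  rw [← Matrix.mul_assoc Uᵀ U, UtU U hU, Matrix.one_mul]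

/-- rotational equivariance of the CM2 collision kernel. -/
theorem cm2_rotational_equivariance (gr gs : ℝ → ℝ → ℝ → ℝ) (v v' : E3)
    (hu : v - v' ≠ 0) (hs : cross3 (v - v') (v + v') ≠ 0)
    (U : Matrix (Fin 3) (Fin 3) ℝ) (hU : U ∈ Matrix.orthogonalGroup (Fin 3) ℝ) :
    cm2 gr gs (matVec U v) (matVec U v') = U * cm2 gr gs v v' * Uᵀ := by
  have hsub : matVec U v - matVec U v' = matVec U (v - v') := (matVec_sub U v v').symm
  have hadd : matVec U v + matVec U v' = matVec U (v + v') := (matVec_add U v v').symm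
  set u : E3 := v - v' with hu_def
  set r : E3 := v + v' with hr_def
  set s : E3 := cross3 u r with hs_def
  set P : Matrix (Fin 3) (Fin 3) ℝ := proj3 u with hP_def
  unfold cm2
  simp only [hsub, hadd]
  -- rewrite the rotated pieces
  rw [cross3_matVec U hU, proj3_matVec U hU, norm_matVec U hU, norm_matVec U hU]
  have hnorms : ‖Matrix.det U • matVec U s‖ = ‖s‖ := by
    rw [norm_smul, norm_matVec U hU, Real.norm_eq_abs, abs_det U hU, one_mul]
  rw [hnorms]
  have hPr : matVec (U * P * Uᵀ) (matVec U r) = matVec U (matVec P r) := by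
    rw [matVec_mul, matVec_mul, ← matVec_mul Uᵀ U, UtU U hU, matVec_one]
  rw [hPr, norm_matVec U hU]
  have hrt : ‖matVec P r‖⁻¹ • matVec U (matVec P r) = matVec U (‖matVec P r‖⁻¹ • matVec P r) := by
    rw [matVec_smul]
  have hst : ‖s‖⁻¹ • Matrix.det U • matVec U s = Matrix.det U • matVec U (‖s‖⁻¹ • s) := by
    rw [matVec_smul, smul_comm]
  rw [hrt, hst]
  rw [outer_matVec]
  have houter_st : outer (Matrix.det U • matVec U (‖s‖⁻¹ • s)) (Matrix.det U • matVec U (‖s‖⁻¹ • s))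
      = U * outer (‖s‖⁻¹ • s) (‖s‖⁻¹ • s) * Uᵀ := by
    rw [outer_smul, det_sq U hU, one_smul, outer_matVec]
  rw [houter_st]
  -- now everything is conjugated; collapse
  have hmid : (gr ‖u‖ ‖r‖ ‖s‖) ^ 2 • (U * outer (‖matVec P r‖⁻¹ • matVec P r) (‖matVec P r‖⁻¹ • matVec P r) * Uᵀ)
      + (gs ‖u‖ ‖r‖ ‖s‖) ^ 2 • (U * outer (‖s‖⁻¹ • s) (‖s‖⁻¹ • s) * Uᵀ)
      = U * ((gr ‖u‖ ‖r‖ ‖s‖) ^ 2 • outer (‖matVec P r‖⁻¹ • matVec P r) (‖matVec P r‖⁻¹ • matVec P r)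
          + (gs ‖u‖ ‖r‖ ‖s‖) ^ 2 • outer (‖s‖⁻¹ • s) (‖s‖⁻¹ • s)) * Uᵀ := by
    rw [Matrix.mul_add, Matrix.add_mul, Matrix.mul_smul, Matrix.mul_smul,
      Matrix.smul_mul, Matrix.smul_mul]
  rw [hmid, myConjMul U hU, myConjMul U hU]
end
end
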